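/- In the one-round Thompson sampling setup, the squared regret is bounded as R² ≤ 2·K·I; equivalently, the lifted information ratio of Thompson sampling with K actions and losses in [0,1] is at most 2K. -/

import Mathlib

/-- Binary relative entropy `g(p‖q)` (with Lean's conventions `log 0 = 0`,
`0/0 = 0`, realizing `0 · log 0 = 0`). -/
noncomputable def binRelEnt (p q : ℝ) : ℝ :=
  p * Real.log (p / q) + (1 - p) * Real.log ((1 - p) / (1 - q))

open Real in
theorem pinsker_half {p q : ℝ} (hp0 : 0 ≤ p) (hp1 : p ≤ 1) (hq0 : 0 < q) (hq1 : q < 1) :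
    (p - q) ^ 2 / 2 ≤ binRelEnt p q := by
  have h1q : (0:ℝ) < 1 - q := by linarith
  set F : ℝ → ℝ := fun x => x * Real.log x + (1 - x) * Real.log (1 - x)
      - x * Real.log q - (1 - x) * Real.log (1 - q) - (x - q) ^ 2 / 2 with hF
  have hFq : F q = 0 := by simp only [hF]; ring
  have hcont : Continuous F := by
    have h1 : Continuous fun x : ℝ => x * Real.log x := Real.continuous_mul_log
    have h2 : Continuous fun x : ℝ => (1 - x) * Real.log (1 - x) :=
      Real.continuous_mul_log.comp (continuous_const.sub continuous_id)
    fun_prop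
  have hderiv : ∀ x ∈ Set.Ioo (0:ℝ) 1, HasDerivAt F
      (Real.log x - Real.log (1 - x) - Real.log q + Real.log (1 - q) - (x - q)) x := by
    intro x hx
    have hx1 : (0:ℝ) < 1 - x := by linarith [hx.2]
    have h1 : HasDerivAt (fun y : ℝ => y * Real.log y) (Real.log x + 1) x :=
      Real.hasDerivAt_mul_log (ne_of_gt hx.1)
    have ha : HasDerivAt (fun y : ℝ => 1 - y) (-1 : ℝ) x := by
      simpa using (hasDerivAt_id x).const_sub 1
    have hb : HasDerivAt (fun y : ℝ => y * Real.log y) (Real.log (1 - x) + 1) (1 - x) :=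
      Real.hasDerivAt_mul_log (ne_of_gt hx1)
    have h2 : HasDerivAt (fun y : ℝ => (1 - y) * Real.log (1 - y))
        (-(Real.log (1 - x) + 1)) x := by
      have := hb.comp x ha
      exact this.congr_deriv (by ring)
    have h3 : HasDerivAt (fun y : ℝ => y * Real.log q) (Real.log q) x := by
      simpa using (hasDerivAt_id x).mul_const (Real.log q)
    have h4 : HasDerivAt (fun y : ℝ => (1 - y) * Real.log (1 - q)) (-Real.log (1 - q)) x := by
      simpa using ha.mul_const (Real.log (1 - q))
    have h5 : HasDerivAt (fun y : ℝ => (y - q) ^ 2 / 2) (x - q) x := by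
      have := (((hasDerivAt_id x).sub_const q).pow 2).div_const 2
      simpa using this
    have := (((h1.add h2).sub h3).sub h4).sub h5
    exact this.congr_deriv (by ring)
  have hrel : binRelEnt p q = F p + (p - q) ^ 2 / 2 := by
    rcases eq_or_lt_of_le hp0 with h0 | h0
    · simp only [binRelEnt, hF, ← h0]
      rw [zero_div, Real.log_zero]
      rw [show (1:ℝ) - 0 = 1 by ring, one_div, Real.log_inv, Real.log_one]
      ring
    · rcases eq_or_lt_of_le hp1 with h1 | h1
      · simp only [binRelEnt, hF, h1]
        rw [show (1:ℝ) - 1 = 0 by ring, zero_div, Real.log_zero, one_div, Real.log_inv, Real.log_one]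
        ring
      · have hp1' : (0:ℝ) < 1 - p := by linarith
        simp only [binRelEnt, hF]
        rw [Real.log_div (ne_of_gt h0) (ne_of_gt hq0),
          Real.log_div (ne_of_gt hp1') (ne_of_gt h1q)]
        ring
  rw [hrel]
  have key : 0 ≤ F p := by
    rcases le_total q p with hqp | hpq
    · have hmono : MonotoneOn F (Set.Icc q p) := by
        apply monotoneOn_of_deriv_nonneg (convex_Icc q p) hcont.continuousOn
        · intro x hx
          rw [interior_Icc] at hx
          have hx01 : x ∈ Set.Ioo (0:ℝ) 1 := ⟨hq0.trans hx.1, lt_of_lt_of_le hx.2 hp1⟩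
          exact ((hderiv x hx01).differentiableAt).differentiableWithinAt
        · intro x hx
          rw [interior_Icc] at hx
          have hx01 : x ∈ Set.Ioo (0:ℝ) 1 := ⟨hq0.trans hx.1, lt_of_lt_of_le hx.2 hp1⟩
          rw [(hderiv x hx01).deriv]
          have hx0 : (0:ℝ) < x := hx01.1
          have hx1 : (0:ℝ) < 1 - x := by linarith [hx01.2]
          have l1 : Real.log q - Real.log x ≤ q / x - 1 := by
            have := Real.log_le_sub_one_of_pos (div_pos hq0 hx0)
            rwa [Real.log_div (ne_of_gt hq0) (ne_of_gt hx0)] at this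
          have l2 : Real.log (1 - x) - Real.log (1 - q) ≤ (1 - x) / (1 - q) - 1 := by
            have := Real.log_le_sub_one_of_pos (div_pos hx1 h1q)
            rwa [Real.log_div (ne_of_gt hx1) (ne_of_gt h1q)] at this
          have l1' : x * (Real.log q - Real.log x) ≤ q - x := by
            have h := mul_le_mul_of_nonneg_left l1 hx0.le
            have he : x * (q / x - 1) = q - x := by field_simp
            linarith [he ▸ h]
          have l2' : (1 - q) * (Real.log (1 - x) - Real.log (1 - q)) ≤ q - x := by
            have h := mul_le_mul_of_nonneg_left l2 h1q.le
            have he : (1 - q) * ((1 - x) / (1 - q) - 1) = (1 - x) - (1 - q) := by field_simp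
            linarith [he ▸ h]
          -- abbreviations
          have hxq : 0 ≤ x - q := by linarith [hx.1]
          have hA : 0 ≤ Real.log x - Real.log q := by nlinarith
          have hB : 0 ≤ Real.log (1 - q) - Real.log (1 - x) := by nlinarith
          have hx1' : x ≤ 1 := by linarith [hx01.2]
          nlinarith [mul_nonneg (by linarith : (0:ℝ) ≤ 1 - x) hA]
      have := hmono (Set.left_mem_Icc.2 hqp) (Set.right_mem_Icc.2 hqp) hqp
      linarith
    · have hanti : AntitoneOn F (Set.Icc p q) := by
        apply antitoneOn_of_deriv_nonpos (convex_Icc p q) hcont.continuousOn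
        · intro x hx
          rw [interior_Icc] at hx
          have hx01 : x ∈ Set.Ioo (0:ℝ) 1 := ⟨lt_of_le_of_lt hp0 hx.1, hx.2.trans hq1⟩
          exact ((hderiv x hx01).differentiableAt).differentiableWithinAt
        · intro x hx
          rw [interior_Icc] at hx
          have hx01 : x ∈ Set.Ioo (0:ℝ) 1 := ⟨lt_of_le_of_lt hp0 hx.1, hx.2.trans hq1⟩
          rw [(hderiv x hx01).deriv]
          have hx0 : (0:ℝ) < x := hx01.1
          have hx1 : (0:ℝ) < 1 - x := by linarith [hx01.2]
          have l1 : Real.log x - Real.log q ≤ x / q - 1 := by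
            have := Real.log_le_sub_one_of_pos (div_pos hx0 hq0)
            rwa [Real.log_div (ne_of_gt hx0) (ne_of_gt hq0)] at this
          have l2 : Real.log (1 - q) - Real.log (1 - x) ≤ (1 - q) / (1 - x) - 1 := by
            have := Real.log_le_sub_one_of_pos (div_pos h1q hx1)
            rwa [Real.log_div (ne_of_gt h1q) (ne_of_gt hx1)] at this
          have l1' : q * (Real.log x - Real.log q) ≤ x - q := by
            have h := mul_le_mul_of_nonneg_left l1 hq0.le
            have he : q * (x / q - 1) = x - q := by field_simp
            linarith [he ▸ h]
          have l2' : (1 - x) * (Real.log (1 - q) - Real.log (1 - x)) ≤ x - q := by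
            have h := mul_le_mul_of_nonneg_left l2 hx1.le
            have he : (1 - x) * ((1 - q) / (1 - x) - 1) = (1 - q) - (1 - x) := by field_simp
            linarith [he ▸ h]
          have hxq : x - q ≤ 0 := by linarith [hx.2]
          have hA : Real.log x - Real.log q ≤ 0 := by nlinarith
          have hB : Real.log (1 - q) - Real.log (1 - x) ≤ 0 := by nlinarith
          have hq1' : q ≤ 1 := hq1.le
          nlinarith [mul_nonpos_of_nonneg_of_nonpos (by linarith : (0:ℝ) ≤ 1 - q) hA]
      have := hanti (Set.left_mem_Icc.2 hpq) (Set.right_mem_Icc.2 hpq) hpq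
      linarith
  exact le_add_of_nonneg_left key

theorem binRelEnt_nonneg {p q : ℝ} (hp0 : 0 ≤ p) (hp1 : p ≤ 1) (hq0 : 0 < q) (hq1 : q < 1) :
    0 ≤ binRelEnt p q :=
  le_trans (by positivity) (pinsker_half hp0 hp1 hq0 hq1)

theorem binRelEnt_le_const {p q : ℝ} (hp0 : 0 ≤ p) (hp1 : p ≤ 1) (hq0 : 0 < q) (hq1 : q < 1) :
    binRelEnt p q ≤ -Real.log q - Real.log (1 - q) := by
  have h1q : (0:ℝ) < 1 - q := by linarith
  have hlq : Real.log q < 0 := Real.log_neg hq0 hq1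
  have hl1q : Real.log (1 - q) < 0 := Real.log_neg h1q (by linarith)
  have key : ∀ a b : ℝ, 0 ≤ a → a ≤ 1 → 0 < b → b < 1 →
      a * Real.log (a / b) ≤ -Real.log b := by
    intro a b ha0 ha1 hb0 hb1
    have hlb : Real.log b < 0 := Real.log_neg hb0 hb1
    rcases eq_or_lt_of_le ha0 with h | h
    · rw [← h, zero_div, Real.log_zero]
      linarith
    · have hlog : Real.log (a / b) ≤ -Real.log b := by
        rw [Real.log_div (ne_of_gt h) (ne_of_gt hb0)]
        have := Real.log_nonpos ha0 ha1
        linarith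
      calc a * Real.log (a / b) ≤ a * (-Real.log b) :=
            mul_le_mul_of_nonneg_left hlog ha0
        _ ≤ 1 * (-Real.log b) := by
            apply mul_le_mul_of_nonneg_right ha1; linarith
        _ = -Real.log b := one_mul _
  have h1 := key p q hp0 hp1 hq0 hq1
  have h2 := key (1 - p) (1 - q) (by linarith) (by linarith) h1q (by linarith)
  unfold binRelEnt
  linarith

/-- Cauchy–Schwarz for tsums, in the form needed. -/
theorem tsum_cs {Θ : Type*} (f x : Θ → ℝ) (hf0 : ∀ θ, 0 ≤ f θ) (hx : ∀ θ, |x θ| ≤ 1)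
    (hf : Summable f) (h1 : Summable (fun θ => f θ * x θ))
    (h2 : Summable (fun θ => f θ * x θ ^ 2)) :
    (∑' θ, f θ * x θ) ^ 2 ≤ (∑' θ, f θ) * ∑' θ, f θ * x θ ^ 2 := by
  set S0 := ∑' θ, f θ with hS0d
  set S1 := ∑' θ, f θ * x θ with hS1d
  set S2 := ∑' θ, f θ * x θ ^ 2 with hS2d
  have hS0 : 0 ≤ S0 := tsum_nonneg fun θ => hf0 θ
  have hS2 : 0 ≤ S2 := tsum_nonneg fun θ => mul_nonneg (hf0 θ) (sq_nonneg _)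
  rcases eq_or_lt_of_le hS0 with h | h
  · have hub : S1 ≤ S0 := by
      apply Summable.tsum_le_tsum _ h1 hf
      intro θ
      nlinarith [abs_le.1 (hx θ), hf0 θ]
    have hlb : -S0 ≤ S1 := by
      have := Summable.tsum_le_tsum (f := fun θ => -f θ) (g := fun θ => f θ * x θ)
        (fun θ => by show -f θ ≤ f θ * x θ; nlinarith [abs_le.1 (hx θ), hf0 θ]) hf.neg h1
      rwa [tsum_neg] at this
    have hS1 : S1 = 0 := le_antisymm (hub.trans_eq h.symm) (by linarith [hlb, h])
    rw [hS1]
    nlinarith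
  · set t := S1 / S0 with ht
    have expand : ∑' θ, f θ * (x θ - t) ^ 2 = S2 - 2 * t * S1 + t ^ 2 * S0 := by
      have hpt : ∀ θ, f θ * (x θ - t) ^ 2
          = (f θ * x θ ^ 2 - 2 * t * (f θ * x θ)) + t ^ 2 * f θ := fun θ => by ring
      rw [tsum_congr hpt, Summable.tsum_add (Summable.sub h2 (h1.mul_left _)) (hf.mul_left _),
        Summable.tsum_sub h2 (h1.mul_left _), tsum_mul_left, tsum_mul_left]
    have key : 0 ≤ S2 - 2 * t * S1 + t ^ 2 * S0 := by
      rw [← expand]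
      exact tsum_nonneg fun θ => mul_nonneg (hf0 θ) (sq_nonneg _)
    have he : S2 - 2 * t * S1 + t ^ 2 * S0 = S2 - S1 ^ 2 / S0 := by
      rw [ht]; field_simp; ring
    rw [he] at key
    have := (div_le_iff₀ h).mp (by linarith : S1 ^ 2 / S0 ≤ S2)
    linarith [this, mul_comm S2 S0]

/-- Grouping a tsum over `Θ` according to the value of `astar`. -/
theorem group_tsum {Θ : Type*} {K : ℕ} (astar : Θ → Fin K) (g : Θ → Fin K → ℝ)
    (hs : ∀ a, Summable (fun θ => if astar θ = a then g θ a else 0)) :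
    ∑' θ, g θ (astar θ) = ∑ a, ∑' θ, if astar θ = a then g θ a else 0 := by
  have hpt : ∀ θ, g θ (astar θ) = ∑ a, if astar θ = a then g θ a else 0 := fun θ => by
    rw [Finset.sum_ite_eq Finset.univ (astar θ) (g θ)]
    simp
  rw [tsum_congr hpt, Summable.tsum_finsetSum (fun a _ => hs a)]

/-- One-round Thompson sampling with `K` actions and losses in `[0,1]`:
`R² ≤ 2 K I`, i.e. the lifted information ratio is at most `2K`. -/
theorem sq_regret_le_two_K_mul_infoGain
    {Θ : Type*} [Countable Θ] {K : ℕ} (hK : 1 ≤ K)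
    (μ : Θ → ℝ) (hμ0 : ∀ θ, 0 ≤ μ θ) (hμ1 : HasSum μ 1)
    (ℓ : Θ → Fin K → ℝ) (hℓ : ∀ θ a, ℓ θ a ∈ Set.Icc (0 : ℝ) 1)
    (astar : Θ → Fin K)
    (lbar : Fin K → ℝ) (hlbar : ∀ a, lbar a = ∑' θ, μ θ * ℓ θ a)
    (hlbar01 : ∀ a, lbar a ∈ Set.Ioo (0 : ℝ) 1)
    (R I : ℝ)
    (hR : R = ∑' θ, ∑' θ', μ θ * μ θ' * (ℓ θ (astar θ') - ℓ θ (astar θ)))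
    (hI : I = ∑' θ, ∑' θ',
      μ θ * μ θ' * binRelEnt (ℓ θ (astar θ')) (lbar (astar θ'))) :
    R ^ 2 ≤ 2 * (K : ℝ) * I := by
  classical
  have hμs : Summable μ := hμ1.summable
  have htμ : ∑' θ, μ θ = 1 := hμ1.tsum_eq
  have hl0 : ∀ θ a, 0 ≤ ℓ θ a := fun θ a => (hℓ θ a).1
  have hl1 : ∀ θ a, ℓ θ a ≤ 1 := fun θ a => (hℓ θ a).2
  have hb0 : ∀ a, 0 < lbar a := fun a => (hlbar01 a).1
  have hb1 : ∀ a, lbar a < 1 := fun a => (hlbar01 a).2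
  -- basic bounds
  have habsl : ∀ θ a, |ℓ θ a| ≤ 1 := fun θ a => abs_le.2 ⟨by linarith [hl0 θ a], hl1 θ a⟩
  have habsd : ∀ θ a, |ℓ θ a - lbar a| ≤ 1 := fun θ a =>
    abs_le.2 ⟨by linarith [hl0 θ a, hb1 a], by linarith [hl1 θ a, hb0 a]⟩
  have habssq : ∀ θ a, |(ℓ θ a - lbar a) ^ 2| ≤ 1 := fun θ a => by
    rw [abs_pow]
    exact pow_le_one₀ (abs_nonneg _) (habsd θ a)
  have hBnn : ∀ θ a, 0 ≤ binRelEnt (ℓ θ a) (lbar a) := fun θ a =>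
    binRelEnt_nonneg (hl0 θ a) (hl1 θ a) (hb0 a) (hb1 a)
  have hBle : ∀ θ a, binRelEnt (ℓ θ a) (lbar a)
      ≤ -Real.log (lbar a) - Real.log (1 - lbar a) := fun θ a =>
    binRelEnt_le_const (hl0 θ a) (hl1 θ a) (hb0 a) (hb1 a)
  have hC0 : ∀ a, 0 ≤ -Real.log (lbar a) - Real.log (1 - lbar a) := by
    intro a
    have h1 := Real.log_neg (hb0 a) (hb1 a)
    have h2 := Real.log_neg (by linarith [hb1 a] : (0:ℝ) < 1 - lbar a)
      (by linarith [hb0 a] : 1 - lbar a < 1)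
    linarith
  have habsB : ∀ θ a, |binRelEnt (ℓ θ a) (lbar a)|
      ≤ -Real.log (lbar a) - Real.log (1 - lbar a) := fun θ a => by
    rw [abs_of_nonneg (hBnn θ a)]; exact hBle θ a
  -- summability helpers
  have hsum : ∀ (f : Θ → ℝ) (c : ℝ), (∀ θ, |f θ| ≤ c * μ θ) → Summable f :=
    fun f c h => Summable.of_norm_bounded (hμs.mul_left c) (by simpa using h)
  have hsum_mul : ∀ (x : Θ → ℝ) (c : ℝ), (∀ θ, |x θ| ≤ c) →
      Summable (fun θ => μ θ * x θ) := by
    intro x c hx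
    apply hsum _ c
    intro θ
    rw [abs_mul, abs_of_nonneg (hμ0 θ), mul_comm c (μ θ)]
    exact mul_le_mul_of_nonneg_left (hx θ) (hμ0 θ)
  have hsum_ite : ∀ (x : Θ → ℝ) (c : ℝ) (a : Fin K), 0 ≤ c → (∀ θ, |x θ| ≤ c) →
      Summable (fun θ => if astar θ = a then μ θ * x θ else 0) := by
    intro x c a hc hx
    apply hsum _ c
    intro θ
    split_ifs
    · rw [abs_mul, abs_of_nonneg (hμ0 θ), mul_comm c (μ θ)]
      exact mul_le_mul_of_nonneg_left (hx θ) (hμ0 θ)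
    · rw [abs_zero]
      exact mul_nonneg hc (hμ0 θ)
  have Sp : ∀ a, Summable (fun θ => if astar θ = a then μ θ else 0) := by
    intro a
    have := hsum_ite (fun _ => (1:ℝ)) 1 a zero_le_one (fun θ => by norm_num)
    exact this.congr (fun θ => by split_ifs <;> ring)
  have Ss : ∀ a, Summable (fun θ => if astar θ = a then μ θ * ℓ θ a else 0) :=
    fun a => hsum_ite (fun θ => ℓ θ a) 1 a zero_le_one (fun θ => habsl θ a)
  have ST : ∀ a, Summable (fun θ => if astar θ = a then μ θ * (ℓ θ a - lbar a) ^ 2 else 0) :=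
    fun a => hsum_ite (fun θ => (ℓ θ a - lbar a) ^ 2) 1 a zero_le_one (fun θ => habssq θ a)
  have SG : ∀ a, Summable (fun θ => μ θ * binRelEnt (ℓ θ a) (lbar a)) :=
    fun a => hsum_mul _ _ (fun θ => habsB θ a)
  -- the per-action probabilities etc.
  set pA : Fin K → ℝ := fun a => ∑' θ, if astar θ = a then μ θ else 0 with hpA
  set sA : Fin K → ℝ := fun a => ∑' θ, if astar θ = a then μ θ * ℓ θ a else 0 with hsA
  set TA : Fin K → ℝ := fun a => ∑' θ, if astar θ = a then μ θ * (ℓ θ a - lbar a) ^ 2 else 0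
    with hTA
  set GA : Fin K → ℝ := fun a => ∑' θ, μ θ * binRelEnt (ℓ θ a) (lbar a) with hGA
  set dA : Fin K → ℝ := fun a => pA a * lbar a - sA a with hdA
  have hpA0 : ∀ a, 0 ≤ pA a := fun a =>
    tsum_nonneg (fun θ => by
      show (0:ℝ) ≤ if astar θ = a then μ θ else 0
      split_ifs; exacts [hμ0 θ, le_refl 0])
  -- grouped expressions
  have hplbar : ∀ θ, (∑' θ', μ θ' * ℓ θ (astar θ')) = ∑ a, pA a * ℓ θ a := by
    intro θ
    rw [group_tsum astar (fun θ' a => μ θ' * ℓ θ a)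
      (fun a => hsum_ite (fun _ => ℓ θ a) 1 a zero_le_one (fun θ' => habsl θ a))]
    apply Finset.sum_congr rfl
    intro a _
    rw [tsum_congr (fun θ' => show (if astar θ' = a then μ θ' * ℓ θ a else 0)
        = (if astar θ' = a then μ θ' else 0) * ℓ θ a from by split_ifs <;> ring),
      tsum_mul_right]
    all_goals exact mul_comm _ _
  have hgB : ∀ θ, (∑' θ', μ θ' * binRelEnt (ℓ θ (astar θ')) (lbar (astar θ')))
      = ∑ a, pA a * binRelEnt (ℓ θ a) (lbar a) := by
    intro θ
    rw [group_tsum astar (fun θ' a => μ θ' * binRelEnt (ℓ θ a) (lbar a))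
      (fun a => hsum_ite (fun _ => binRelEnt (ℓ θ a) (lbar a)) _ a (hC0 a)
        (fun θ' => habsB θ a))]
    apply Finset.sum_congr rfl
    intro a _
    rw [tsum_congr (fun θ' => show (if astar θ' = a then μ θ' * binRelEnt (ℓ θ a) (lbar a) else 0)
        = (if astar θ' = a then μ θ' else 0) * binRelEnt (ℓ θ a) (lbar a) from
        by split_ifs <;> ring),
      tsum_mul_right]
    all_goals exact mul_comm _ _
  -- R = ∑ a, dA a
  have hRR : R = ∑ a, dA a := by
    rw [hR]
    have inner : ∀ θ, (∑' θ', μ θ * μ θ' * (ℓ θ (astar θ') - ℓ θ (astar θ)))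
        = (∑ a, pA a * (μ θ * ℓ θ a)) - μ θ * ℓ θ (astar θ) := by
      intro θ
      have e1 : ∀ θ', μ θ * μ θ' * (ℓ θ (astar θ') - ℓ θ (astar θ))
          = μ θ * (μ θ' * ℓ θ (astar θ') - μ θ' * ℓ θ (astar θ)) := fun θ' => by ring
      rw [tsum_congr e1, tsum_mul_left,
        Summable.tsum_sub (hsum_mul (fun θ' => ℓ θ (astar θ')) 1 (fun θ' => habsl θ (astar θ')))
          (hμs.mul_right (ℓ θ (astar θ))),
        hplbar θ, tsum_mul_right, htμ, one_mul, mul_sub, Finset.mul_sum]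
      congr 1
      exact Finset.sum_congr rfl (fun a _ => by ring)
    rw [tsum_congr inner,
      Summable.tsum_sub (summable_sum (fun a _ => ((hsum_mul (fun θ => ℓ θ a) 1
          (fun θ => habsl θ a)).mul_left (pA a))))
        (hsum_mul (fun θ => ℓ θ (astar θ)) 1 (fun θ => habsl θ (astar θ))),
      Summable.tsum_finsetSum (fun a _ => ((hsum_mul (fun θ => ℓ θ a) 1
          (fun θ => habsl θ a)).mul_left (pA a))),
      group_tsum astar (fun θ a => μ θ * ℓ θ a) Ss, ← Finset.sum_sub_distrib]
    apply Finset.sum_congr rfl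
    intro a _
    rw [tsum_mul_left, ← hlbar a]
    all_goals rfl
  -- I = ∑ a, pA a * GA a
  have hII : I = ∑ a, pA a * GA a := by
    rw [hI]
    have inner : ∀ θ, (∑' θ', μ θ * μ θ' * binRelEnt (ℓ θ (astar θ')) (lbar (astar θ')))
        = ∑ a, pA a * (μ θ * binRelEnt (ℓ θ a) (lbar a)) := by
      intro θ
      have e1 : ∀ θ', μ θ * μ θ' * binRelEnt (ℓ θ (astar θ')) (lbar (astar θ'))
          = μ θ * (μ θ' * binRelEnt (ℓ θ (astar θ')) (lbar (astar θ'))) := fun θ' => by ring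
      rw [tsum_congr e1, tsum_mul_left, hgB θ, Finset.mul_sum]
      exact Finset.sum_congr rfl (fun a _ => by ring)
    rw [tsum_congr inner, Summable.tsum_finsetSum (fun a _ => (SG a).mul_left (pA a))]
    exact Finset.sum_congr rfl (fun a _ => by rw [tsum_mul_left])
  -- TA a ≤ 2 * GA a
  have hTG : ∀ a, TA a ≤ 2 * GA a := by
    intro a
    have hle : ∀ θ, (if astar θ = a then μ θ * (ℓ θ a - lbar a) ^ 2 else 0)
        ≤ 2 * (μ θ * binRelEnt (ℓ θ a) (lbar a)) := by
      intro θ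
      have hp := pinsker_half (hl0 θ a) (hl1 θ a) (hb0 a) (hb1 a)
      split_ifs
      · nlinarith [hμ0 θ]
      · have := mul_nonneg (hμ0 θ) (hBnn θ a)
        linarith
    have := Summable.tsum_le_tsum hle (ST a) ((SG a).mul_left 2)
    rwa [tsum_mul_left] at this
  -- dA a ^ 2 ≤ pA a * TA a (Cauchy–Schwarz)
  have hdT : ∀ a, dA a ^ 2 ≤ pA a * TA a := by
    intro a
    have hcs1 : Summable (fun θ => (if astar θ = a then μ θ else 0) * (ℓ θ a - lbar a)) :=
      (hsum_ite (fun θ => ℓ θ a - lbar a) 1 a zero_le_one (fun θ => habsd θ a)).congr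
        (fun θ => by split_ifs <;> ring)
    have hcs2 : Summable (fun θ => (if astar θ = a then μ θ else 0) * (ℓ θ a - lbar a) ^ 2) :=
      (ST a).congr (fun θ => by split_ifs <;> ring)
    have hcs := tsum_cs (fun θ => if astar θ = a then μ θ else 0) (fun θ => ℓ θ a - lbar a)
      (fun θ => by show (0:ℝ) ≤ if astar θ = a then μ θ else 0
                   split_ifs; exacts [hμ0 θ, le_refl 0]) (fun θ => habsd θ a)
      (Sp a) hcs1 hcs2
    have e1 : (∑' θ, (if astar θ = a then μ θ else 0) * (ℓ θ a - lbar a))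
        = sA a - lbar a * pA a := by
      rw [tsum_congr (fun θ => show (if astar θ = a then μ θ else 0) * (ℓ θ a - lbar a)
          = (if astar θ = a then μ θ * ℓ θ a else 0)
            - lbar a * (if astar θ = a then μ θ else 0) from by split_ifs <;> ring),
        Summable.tsum_sub (Ss a) ((Sp a).mul_left (lbar a)), tsum_mul_left]
    have e2 : (∑' θ, (if astar θ = a then μ θ else 0) * (ℓ θ a - lbar a) ^ 2) = TA a :=
      tsum_congr (fun θ => by split_ifs <;> ring)
    rw [e1, e2] at hcs
    calc dA a ^ 2 = (sA a - lbar a * pA a) ^ 2 := by rw [hdA]; ring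
      _ ≤ pA a * TA a := hcs
  -- assemble
  have hsumK : (∑ a, dA a) ^ 2 ≤ (K : ℝ) * ∑ a, dA a ^ 2 := by
    have h := Finset.sum_mul_sq_le_sq_mul_sq Finset.univ (fun _ => (1:ℝ)) dA
    simp only [one_mul, one_pow, Finset.sum_const, Finset.card_univ, Fintype.card_fin,
      nsmul_eq_mul, mul_one] at h
    exact h
  have h2I : ∑ a, dA a ^ 2 ≤ 2 * I := by
    rw [hII, Finset.mul_sum]
    apply Finset.sum_le_sum
    intro a _
    calc dA a ^ 2 ≤ pA a * TA a := hdT a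
      _ ≤ pA a * (2 * GA a) := mul_le_mul_of_nonneg_left (hTG a) (hpA0 a)
      _ = 2 * (pA a * GA a) := by ring
  calc R ^ 2 = (∑ a, dA a) ^ 2 := by rw [hRR]
    _ ≤ (K : ℝ) * ∑ a, dA a ^ 2 := hsumK
    _ ≤ (K : ℝ) * (2 * I) := mul_le_mul_of_nonneg_left h2I (Nat.cast_nonneg K)
    _ = 2 * (K : ℝ) * I := by ring
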